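/- In the security second routing model, for any destination d, attacker m, source AS s, and any deployment S of secure ASes, the stable route of s has the same relationship type (customer, peer, or provider) as every route in BPR(s, ∅, m, d). -/

import Mathlib

open scoped Classical

namespace SBGP

/-- Business relationship of a neighbor, from the point of view of a given AS. -/
inductive Rel
  | customer
  | peer
  | provider
deriving DecidableEq

/-- The three positions at which the secure-route preference step can be inserted. -/
inductive SecModel
  | first
  | second
  | third
deriving DecidableEq

/-- An AS-level graph with business relationships on its edges. -/
structure ASGraph (V : Type*) where
  adj : V → V → Bool
  /-- `rel u v` is the relationship of `v` as seen from `u`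
      (`customer` means `v` is `u`'s customer, etc.). -/
  rel : V → V → Rel
  adj_symm : ∀ u v, adj u v = adj v u
  adj_irrefl : ∀ v, adj v v = false
  rel_consistent : ∀ u v, adj u v = true →
    ((rel u v = Rel.customer ↔ rel v u = Rel.provider) ∧
     (rel u v = Rel.peer ↔ rel v u = Rel.peer))

variable {V : Type*}

def lpRank : Rel → ℕ
  | Rel.customer => 0
  | Rel.peer => 1
  | Rel.provider => 2

/-- The relationship of the next hop of a route (`none` for trivial routes). -/
def nextRel (G : ASGraph V) : List V → Option Rel
  | a :: b :: _ => some (G.rel a b)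
  | _ => none

/-- Local-preference value of a route (customer < peer < provider). -/
def lpVal (G : ASGraph V) : List V → ℕ
  | a :: b :: _ => lpRank (G.rel a b)
  | _ => 0

/-- `R` is a (nonempty) path in `G`. -/
def IsPath (G : ASGraph V) : List V → Prop
  | [] => False
  | [_] => True
  | a :: b :: rest => G.adj a b = true ∧ IsPath G (b :: rest)

/-- `R` is a simple route in `G` ending at `d`. -/
def IsRouteTo (G : ASGraph V) (R : List V) (d : V) : Prop :=
  R.Nodup ∧ IsPath G R ∧ R.getLast? = some d

/-- The export rule (Ex) along a route `a :: b :: c :: …`: each internal AS `b`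
announces its route (with next hop `c`) to `a` only if that route is a customer
route of `b`, or `a` is `b`'s customer. -/
def ExportOK (G : ASGraph V) : List V → Prop
  | a :: b :: c :: rest =>
      (G.rel b c = Rel.customer ∨ G.rel b a = Rel.customer) ∧
      ExportOK G (b :: c :: rest)
  | _ => True

/-- A route is secure iff every AS on it has deployed S*BGP and it does not
contain the attacker (the bogus route is insecure even if the attacker is in `S`). -/
def SecureRoute (S : Finset V) (m : Option V) (R : List V) : Prop :=
  (∀ v ∈ R, v ∈ S) ∧ (∀ m', m = some m' → m' ∉ R)

/-- A legitimate route: ends at the destination `d` and avoids the attacker. -/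
def LegitRoute (m : Option V) (d : V) (R : List V) : Prop :=
  R.getLast? = some d ∧ ∀ m', m = some m' → m' ∉ R

/-- Perceivable routes at `s` for destination `d` when the (optional) attacker `m`
announces the bogus path "m,d": either a genuine export-compliant route to `d`
avoiding `m`, or an export-compliant route to `m` extended by `m`'s claimed
(possibly nonexistent) edge to `d`. -/
def Perceivable (G : ASGraph V) (m : Option V) (d : V) (s : V) (R : List V) : Prop :=
  R.head? = some s ∧
  ((IsRouteTo G R d ∧ ExportOK G R ∧ ∀ m', m = some m' → m' ∉ R) ∨
   (∃ m' R', m = some m' ∧ R = R' ++ [d] ∧ IsRouteTo G R' m' ∧ d ∉ R' ∧ ExportOK G R'))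

/-- The rank of a route (smaller is better), encoding lexicographically the
ranking steps of the given security model: LP (customer > peer > provider),
SP (shorter > longer) and SecP (secure > insecure), in the order determined by
the model.  All components are `< Fintype.card V + 2`, so the encoding is
faithful on simple routes. -/
noncomputable def rankNat [Fintype V] (G : ASGraph V) (S : Finset V) (m : Option V)
    (mdl : SecModel) (R : List V) : ℕ :=
  let B := Fintype.card V + 2
  let lp := lpVal G R
  let len := R.length
  let sec : ℕ := if SecureRoute S m R then 0 else 1
  match mdl with
  | SecModel.first => sec * B * B + lp * B + len
  | SecModel.second => lp * B * B + sec * B + len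
  | SecModel.third => lp * B * B + len * B + sec

/-- `n` exports the route `R` (its currently selected route) to neighbor `s`:
always if `R` is a customer route of `n` or `n` originates `R`; otherwise only
if `s` is `n`'s customer. -/
def exportsTo (G : ASGraph V) (n s : V) : List V → Prop
  | _ :: c :: _ => G.rel n c = Rel.customer ∨ G.rel n s = Rel.customer
  | _ => True

/-- Routes available to `s` given the current selections `σ` of all ASes:
routes exported by neighbors (with BGP loop detection), together with the
attacker's bogus announcement "m,d" to each of its neighbors. -/
def Avail (G : ASGraph V) (m : Option V) (d : V) (σ : V → List V) (s : V)
    (R : List V) : Prop :=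
  (∃ n, G.adj s n = true ∧ (∀ m', m = some m' → n ≠ m') ∧ σ n ≠ [] ∧
      (σ n).head? = some n ∧ s ∉ σ n ∧ exportsTo G n s (σ n) ∧ R = s :: σ n) ∨
  (∃ m', m = some m' ∧ G.adj s m' = true ∧ s ≠ d ∧ R = [s, m', d])

/-- A stable routing state for destination `d`, secure deployment `S`,
attacker `m`, security model `mdl` and tiebreak `tb`: every AS (other than the
destination and the attacker) selects the best available route, where ties in
rank are broken by the strict tiebreak `tb`. -/
def Stable [Fintype V] (G : ASGraph V) (tb : V → List V → ℕ) (S : Finset V)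
    (m : Option V) (d : V) (mdl : SecModel) (σ : V → List V) : Prop :=
  σ d = [d] ∧
  (∀ m', m = some m' → σ m' = []) ∧
  ∀ s, s ≠ d → (∀ m', m = some m' → s ≠ m') →
    ((σ s = [] ∧ ∀ R, ¬ Avail G m d σ s R) ∨
     (Avail G m d σ s (σ s) ∧
      ∀ R, Avail G m d σ s R → R ≠ σ s →
        rankNat G S m mdl (σ s) < rankNat G S m mdl R ∨
        (rankNat G S m mdl (σ s) = rankNat G S m mdl R ∧ tb s (σ s) < tb s R)))

/-- `s` is happy: it selects a legitimate route to `d`, avoiding the attacker. -/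
def Happy (m : Option V) (d : V) (σ : V → List V) (s : V) : Prop :=
  σ s ≠ [] ∧ (σ s).getLast? = some d ∧ ∀ m', m = some m' → m' ∉ σ s

/-- The set of most-preferred perceivable routes of `s` (before the tiebreak step). -/
def BPR [Fintype V] (G : ASGraph V) (S : Finset V) (m : Option V) (d : V)
    (mdl : SecModel) (s : V) (R : List V) : Prop :=
  Perceivable G m d s R ∧
  ∀ R', Perceivable G m d s R' → rankNat G S m mdl R ≤ rankNat G S m mdl R'

/-- The number of happy source ASes (sources other than `m` and `d`). -/
noncomputable def happyCount [Fintype V] [DecidableEq V] (m d : V)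
    (σ : V → List V) : ℕ :=
  (Finset.univ.filter fun s => s ≠ m ∧ s ≠ d ∧ Happy (some m) d σ s).card

/-- The customer-provider hierarchy is acyclic. -/
def Hierarchy (G : ASGraph V) : Prop :=
  ∃ h : V → ℕ, ∀ u v, G.adj u v = true → G.rel u v = Rel.customer → h v < h u

/-- The tiebreak of every AS is deterministic (injective on routes). -/
def InjTB (tb : V → List V → ℕ) : Prop :=
  ∀ s, Function.Injective (tb s)

end SBGP
namespace SBGP

section Aux

set_option linter.unusedSectionVars false

variable {V : Type*} [Fintype V] [DecidableEq V]

lemma lpRank_le_two (r : Rel) : lpRank r ≤ 2 := by cases r <;> simp [lpRank]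

lemma lpRank_eq_zero {r : Rel} (h : lpRank r = 0) : r = Rel.customer := by
  cases r <;> simp_all [lpRank]

lemma lpRank_injective {r r' : Rel} (h : lpRank r = lpRank r') : r = r' := by
  cases r <;> cases r' <;> simp_all [lpRank]

lemma lpVal_le_two (G : ASGraph V) (R : List V) : lpVal G R ≤ 2 := by
  match R with
  | [] => simp [lpVal]
  | [a] => simp [lpVal]
  | a :: b :: t => exact lpRank_le_two _

lemma lpVal_cons_cons (G : ASGraph V) (a b : V) (t : List V) :
    lpVal G (a :: b :: t) = lpRank (G.rel a b) := rfl

lemma mem_of_getLast?_aux : ∀ (l : List V) (a : V), l.getLast? = some a → a ∈ l := by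
  intro l
  induction l with
  | nil => intro a h; simp at h
  | cons x t ih =>
    intro a h
    cases t with
    | nil => simp_all
    | cons y t' =>
      rw [List.getLast?_cons_cons] at h
      exact List.mem_cons_of_mem _ (ih a h)

lemma rank_second (G : ASGraph V) (S : Finset V) (m : Option V) (R : List V) :
    rankNat G S m SecModel.second R =
      lpVal G R * (Fintype.card V + 2) * (Fintype.card V + 2) +
        (if SecureRoute S m R then 0 else 1) * (Fintype.card V + 2) + R.length := rfl

lemma lp_le_of_rank_le (G : ASGraph V) (S : Finset V) (m : Option V) (X Y : List V)
    (hY : Y.length ≤ Fintype.card V + 1)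
    (h : rankNat G S m SecModel.second X ≤ rankNat G S m SecModel.second Y) :
    lpVal G X ≤ lpVal G Y := by
  by_contra hc
  push_neg at hc
  rw [rank_second, rank_second] at h
  set B := Fintype.card V + 2 with hB
  set sX : ℕ := if SecureRoute S m X then 0 else 1 with hsX
  set sY : ℕ := if SecureRoute S m Y then 0 else 1 with hsY
  have h1 : lpVal G Y + 1 ≤ lpVal G X := hc
  have hsY1 : sY ≤ 1 := by rw [hsY]; split <;> omega
  have key : (lpVal G Y + 1) * (B * B) ≤ lpVal G X * (B * B) :=
    Nat.mul_le_mul_right _ h1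
  have chain : lpVal G Y * (B * B) + B * B ≤ lpVal G Y * (B * B) + B + Y.length := by
    calc lpVal G Y * (B * B) + B * B = (lpVal G Y + 1) * (B * B) := by ring
      _ ≤ lpVal G X * (B * B) := key
      _ = lpVal G X * B * B := by ring
      _ ≤ lpVal G X * B * B + (sX * B + X.length) := Nat.le_add_right _ _
      _ = lpVal G X * B * B + sX * B + X.length := by ring
      _ ≤ lpVal G Y * B * B + sY * B + Y.length := h
      _ ≤ lpVal G Y * B * B + 1 * B + Y.length := by
          have := Nat.mul_le_mul_right B hsY1
          omega
      _ = lpVal G Y * (B * B) + B + Y.length := by ring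
  have h2 : B * B ≤ B + Y.length := by omega
  have h2B : 2 * B ≤ B * B := Nat.mul_le_mul_right B (by omega)
  have hlen : Y.length + 1 ≤ B := by omega
  omega

variable {G : ASGraph V} {tb : V → List V → ℕ} {S : Finset V} {m d : V} {σ : V → List V}

lemma stable_sigma_d (hσ : Stable G tb S (some m) d SecModel.second σ) : σ d = [d] := hσ.1

lemma stable_sigma_m (hσ : Stable G tb S (some m) d SecModel.second σ) : σ m = [] :=
  hσ.2.1 m rfl

lemma stable_avail (hσ : Stable G tb S (some m) d SecModel.second σ)
    (x : V) (hxd : x ≠ d) (hxm : x ≠ m) (hx : σ x ≠ []) :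
    Avail G (some m) d σ x (σ x) := by
  rcases hσ.2.2 x hxd (fun m' hm' => by cases hm'; exact hxm) with h | h
  · exact absurd h.1 hx
  · exact h.1

lemma stable_pair (hσ : Stable G tb S (some m) d SecModel.second σ)
    (x : V) (hxd : x ≠ d) (hxm : x ≠ m) (A : List V) (hA : Avail G (some m) d σ x A) :
    Avail G (some m) d σ x (σ x) ∧
      rankNat G S (some m) SecModel.second (σ x) ≤ rankNat G S (some m) SecModel.second A := by
  rcases hσ.2.2 x hxd (fun m' hm' => by cases hm'; exact hxm) with h | h
  · exact absurd hA (h.2 A)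
  · refine ⟨h.1, ?_⟩
    by_cases he : A = σ x
    · rw [he]
    · rcases h.2 A hA he with h' | h'
      · exact le_of_lt h'
      · exact le_of_eq h'.1

lemma avail_shape {x : V} {A : List V} (hA : Avail G (some m) d σ x A) :
    ∃ b L, A = x :: b :: L := by
  rcases hA with ⟨n, _, _, hne, hhead, _, _, hAeq⟩ | ⟨m', _, _, _, hAeq⟩
  · cases hn : σ n with
    | nil => exact absurd hn hne
    | cons b L => exact ⟨b, L, by rw [hAeq, hn]⟩
  · exact ⟨m', [d], hAeq⟩

lemma sigma_head (hσ : Stable G tb S (some m) d SecModel.second σ)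
    (x : V) (hx : σ x ≠ []) : (σ x).head? = some x := by
  by_cases hxd : x = d
  · subst hxd; rw [hσ.1]; rfl
  by_cases hxm : x = m
  · subst hxm; exact absurd (stable_sigma_m hσ) hx
  obtain ⟨b, L, hshape⟩ := avail_shape (stable_avail hσ x hxd hxm hx)
  rw [hshape]; rfl

lemma sigma_nodup (hσ : Stable G tb S (some m) d SecModel.second σ) (hmd : m ≠ d) :
    ∀ k x, (σ x).length ≤ k → (σ x).Nodup := by
  intro k
  induction k with
  | zero =>
    intro x h
    have : σ x = [] := List.length_eq_zero_iff.mp (Nat.le_zero.mp h)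
    simp [this]
  | succ k ih =>
    intro x h
    by_cases hx : σ x = []
    · simp [hx]
    by_cases hxd : x = d
    · subst hxd; rw [hσ.1]; simp
    by_cases hxm : x = m
    · subst hxm; rw [stable_sigma_m hσ]; simp
    rcases stable_avail hσ x hxd hxm hx with
      ⟨n, _, _, hne, _, hnot, _, hAeq⟩ | ⟨m', hm', _, hxd', hAeq⟩
    · rw [hAeq]
      refine List.nodup_cons.mpr ⟨hnot, ?_⟩
      apply ih n
      rw [hAeq] at h
      simp only [List.length_cons] at h
      omega
    · cases hm'
      rw [hAeq]
      simp [List.nodup_cons, hxm, hxd, hmd]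

lemma sigma_nodup' (hσ : Stable G tb S (some m) d SecModel.second σ) (hmd : m ≠ d)
    (x : V) : (σ x).Nodup :=
  sigma_nodup hσ hmd (σ x).length x le_rfl

lemma avail_len (hσ : Stable G tb S (some m) d SecModel.second σ) (hmd : m ≠ d)
    {x : V} {A : List V} (hA : Avail G (some m) d σ x A) :
    A.length ≤ Fintype.card V + 1 := by
  rcases hA with ⟨n, _, _, hne, _, _, _, hAeq⟩ | ⟨m', hm', _, _, hAeq⟩
  · rw [hAeq]
    simp only [List.length_cons]
    have := List.Nodup.length_le_card (sigma_nodup' hσ hmd n)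
    omega
  · cases hm'
    rw [hAeq]
    have : ({m, d} : Finset V).card ≤ Fintype.card V := Finset.card_le_univ _
    rw [Finset.card_insert_of_notMem (by simp [hmd]), Finset.card_singleton] at this
    simp only [List.length_cons, List.length_nil]
    omega

lemma head?_destruct {R : List V} {s : V} (h : R.head? = some s) : ∃ t, R = s :: t := by
  cases R with
  | nil => simp at h
  | cons a t => simp at h; exact ⟨t, by rw [h]⟩

lemma sigma_perceivable (hσ : Stable G tb S (some m) d SecModel.second σ) (hmd : m ≠ d) :
    ∀ k x, x ≠ m → (σ x).length ≤ k → σ x ≠ [] →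
      Perceivable G (some m) d x (σ x) := by
  intro k
  induction k with
  | zero =>
    intro x _ h hx
    exact absurd (List.length_eq_zero_iff.mp (Nat.le_zero.mp h)) hx
  | succ k ih =>
    intro x hxm hlen hx
    by_cases hxd : x = d
    · rw [hxd, hσ.1]
      exact ⟨rfl, Or.inl ⟨⟨List.nodup_singleton d, trivial, rfl⟩, trivial,
        fun m' hm' => by cases hm'; simpa using hmd⟩⟩
    rcases stable_avail hσ x hxd hxm hx with
      ⟨n, hadj, hnm', hne, hhead, hnot, hexp, hAeq⟩ | ⟨m', hm', hadj, hxd', hAeq⟩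
    swap
    · cases hm'
      rw [hAeq]
      refine ⟨rfl, Or.inr ⟨m, [x, m], rfl, rfl, ⟨?_, ⟨hadj, trivial⟩, by simp⟩, ?_, trivial⟩⟩
      · simp [hxm]
      · simp only [List.mem_cons, List.mem_singleton, List.not_mem_nil]
        push_neg
        exact ⟨Ne.symm hxd, fun h => hmd h.symm, trivial⟩
    · have hnm : n ≠ m := hnm' m rfl
      by_cases hnd : n = d
      · rw [hAeq, hnd, hσ.1]
        refine ⟨rfl, Or.inl ⟨⟨by simp [hxd], ⟨by rw [← hnd]; exact hadj, trivial⟩, by simp⟩,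
          trivial, fun m' hm' => ?_⟩⟩
        cases hm'
        intro h
        rcases List.mem_cons.mp h with h | h
        · exact hxm h.symm
        · simp at h; exact hmd h
      · have hlen' : (σ n).length ≤ k := by
          rw [hAeq] at hlen; simp only [List.length_cons] at hlen; omega
        obtain ⟨hhd, hcases⟩ := ih n hnm hlen' hne
        rcases hcases with ⟨⟨hnd2, hpath, hlast⟩, hexp2, hm2⟩ |
          ⟨m', R', hm', hR'eq, hroute, hdnot, hexp2⟩
        · obtain ⟨t, hnt⟩ := head?_destruct hhd
          cases t with
          | nil =>
            exfalso
            rw [hnt] at hlast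
            simp at hlast
            exact hnd hlast
          | cons c t' =>
            rw [hAeq, hnt]
            have hnot' : x ∉ n :: c :: t' := by rw [← hnt]; exact hnot
            have hpath' : IsPath G (n :: c :: t') := by rw [← hnt]; exact hpath
            have hnd2' : (n :: c :: t').Nodup := by rw [← hnt]; exact hnd2
            have hexp' : exportsTo G n x (n :: c :: t') := by rw [← hnt]; exact hexp
            have hexp2' : ExportOK G (n :: c :: t') := by rw [← hnt]; exact hexp2
            refine ⟨rfl, Or.inl ⟨⟨List.nodup_cons.mpr ⟨hnot', hnd2'⟩, ⟨hadj, hpath'⟩, ?_⟩,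
              ⟨hexp', hexp2'⟩, ?_⟩⟩
            · rw [List.getLast?_cons_cons, ← hnt]; exact hlast
            · intro m' hm'
              cases hm'
              intro hmm
              rcases List.mem_cons.mp hmm with h | h
              · exact hxm h.symm
              · exact (hm2 m rfl) (by rw [hnt]; exact h)
        · cases hm'
          have hhdR' : R'.head? = some n := by
            cases R' with
            | nil => exact absurd hroute.2.2 (by simp)
            | cons a t =>
              rw [hR'eq] at hhd
              simp only [List.cons_append, List.head?_cons, Option.some.injEq] at hhd
              simp [hhd]
          obtain ⟨t, rfl⟩ := head?_destruct hhdR'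
          cases t with
          | nil =>
            exfalso
            have h2 := hroute.2.2
            simp at h2
            exact hnm h2
          | cons c t3 =>
            rw [hAeq, hR'eq]
            have hnot' : x ∉ n :: c :: t3 := by
              intro h
              exact hnot (by rw [hR'eq]; exact List.mem_append_left _ h)
            refine ⟨rfl, Or.inr ⟨m, x :: n :: c :: t3, rfl, rfl,
              ⟨List.nodup_cons.mpr ⟨hnot', hroute.1⟩, ⟨hadj, hroute.2.1⟩,
                by rw [List.getLast?_cons_cons]; exact hroute.2.2⟩, ?_, ?_, hexp2⟩⟩
            · intro h
              rcases List.mem_cons.mp h with h | h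
              · exact hxd h.symm
              · exact hdnot h
            · have hexp' : exportsTo G n x ((n :: c :: t3) ++ [d]) := by
                rw [← hR'eq]; exact hexp
              exact hexp'

lemma suffix_lemma (hσ : Stable G tb S (some m) d SecModel.second σ) (hmd : m ≠ d)
    {s : V} (hsd : s ≠ d) (hsm : s ≠ m) :
    ∀ k x, x ≠ d → x ≠ m → (σ x).length ≤ k → s ∈ σ x → s ≠ x →
      σ s ≠ [] ∧ (lpVal G (σ x) = 0 → lpVal G (σ s) = 0) := by
  intro k
  induction k with
  | zero =>
    intro x _ _ h hs _
    rw [List.length_eq_zero_iff.mp (Nat.le_zero.mp h)] at hs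
    simp at hs
  | succ k ih =>
    intro x hxd hxm hlen hmem hsx
    have hx : σ x ≠ [] := fun h => by simp [h] at hmem
    rcases stable_avail hσ x hxd hxm hx with
      ⟨n, hadj, hnm', hne, hhead, hnot, hexp, hAeq⟩ | ⟨m', hm', hadj, hxd', hAeq⟩
    swap
    · cases hm'
      rw [hAeq] at hmem
      simp at hmem
      rcases hmem with h | h | h
      exacts [absurd h hsx, absurd h hsm, absurd h hsd]
    have hnm : n ≠ m := hnm' m rfl
    rw [hAeq] at hmem
    have hmem' : s ∈ σ n := by
      rcases List.mem_cons.mp hmem with h | h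
      · exact absurd h hsx
      · exact h
    obtain ⟨t, hnt⟩ := head?_destruct hhead
    have hadj' : G.adj n x = true := by rw [G.adj_symm]; exact hadj
    by_cases hns : n = s
    · refine ⟨by rw [← hns]; exact hne, ?_⟩
      intro hlp0
      rw [← hns]
      cases t with
      | nil => rw [hnt]; rfl
      | cons c t' =>
        have hcust : G.rel x n = Rel.customer := by
          rw [hAeq, hnt] at hlp0
          exact lpRank_eq_zero hlp0
        have hprov : G.rel n x ≠ Rel.customer := by
          intro hcon
          have h2 := ((G.rel_consistent n x hadj').1).mp hcon
          rw [hcust] at h2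
          simp at h2
        have he : exportsTo G n x (n :: c :: t') := by rw [← hnt]; exact hexp
        have hc := he.resolve_right hprov
        rw [hnt, lpVal_cons_cons, hc]
        rfl
    · have hsn2 : s ≠ n := fun h => hns h.symm
      have hnd : n ≠ d := by
        intro h
        rw [h, hσ.1] at hmem'
        simp at hmem'
        exact hsd hmem'
      have hlen' : (σ n).length ≤ k := by
        rw [hAeq] at hlen
        simp only [List.length_cons] at hlen
        omega
      have IH := ih n hnd hnm hlen' hmem' hsn2
      refine ⟨IH.1, fun hlp0 => IH.2 ?_⟩
      have ht : t ≠ [] := by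
        intro h
        rw [hnt, h] at hmem'
        simp at hmem'
        exact hsn2 hmem'
      obtain ⟨c, t', rfl⟩ : ∃ c t', t = c :: t' := by
        cases t with
        | nil => exact absurd rfl ht
        | cons c t' => exact ⟨c, t', rfl⟩
      have hcust : G.rel x n = Rel.customer := by
        rw [hAeq, hnt] at hlp0
        exact lpRank_eq_zero hlp0
      have hprov : G.rel n x ≠ Rel.customer := by
        intro hcon
        have h2 := ((G.rel_consistent n x hadj').1).mp hcon
        rw [hcust] at h2
        simp at h2
      have he : exportsTo G n x (n :: c :: t') := by rw [← hnt]; exact hexp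
      have hc := he.resolve_right hprov
      rw [hnt, lpVal_cons_cons, hc]
      rfl

lemma core_step (hσ : Stable G tb S (some m) d SecModel.second σ) (hmd : m ≠ d)
    {s n c : V} (hsd : s ≠ d) (hsm : s ≠ m)
    (hadj : G.adj s n = true) (hnm : n ≠ m) (hnd : n ≠ d)
    (hIH1 : σ n ≠ []) (hIH2 : lpVal G (σ n) ≤ lpRank (G.rel n c))
    (hor : G.rel n c = Rel.customer ∨ G.rel n s = Rel.customer) :
    σ s ≠ [] ∧ lpVal G (σ s) ≤ lpRank (G.rel s n) := by
  by_cases hmem : s ∈ σ n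
  · have hsn : s ≠ n := by
      intro h
      rw [← h] at hadj
      rw [G.adj_irrefl] at hadj
      simp at hadj
    have suf := suffix_lemma hσ hmd hsd hsm (σ n).length n hnd hnm le_rfl hmem hsn
    refine ⟨suf.1, ?_⟩
    by_cases hrelp : G.rel s n = Rel.provider
    · rw [hrelp]
      exact lpVal_le_two G (σ s)
    · have hadjns : G.adj n s = true := by rw [G.adj_symm]; exact hadj
      have hnsC : G.rel n s ≠ Rel.customer :=
        fun h => hrelp (((G.rel_consistent n s hadjns).1).mp h)
      have hc := hor.resolve_right hnsC
      have h0 : lpVal G (σ n) = 0 := by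
        rw [hc] at hIH2
        simpa [lpRank] using hIH2
      rw [suf.2 h0]
      exact Nat.zero_le _
  · have havn := stable_avail hσ n hnd hnm hIH1
    obtain ⟨b, L, hshape⟩ := avail_shape havn
    have hexp2 : exportsTo G n s (σ n) := by
      rcases hor with hc | hs'
      · have h0 : lpVal G (σ n) = 0 := by
          rw [hc] at hIH2
          simpa [lpRank] using hIH2
        rw [hshape] at h0 ⊢
        exact Or.inl (lpRank_eq_zero h0)
      · rw [hshape]
        exact Or.inr hs'
    have hA : Avail G (some m) d σ s (s :: σ n) :=
      Or.inl ⟨n, hadj, fun m' hm' => by cases hm'; exact hnm, hIH1,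
        sigma_head hσ n hIH1, hmem, hexp2, rfl⟩
    obtain ⟨hav, hrank⟩ := stable_pair hσ s hsd hsm _ hA
    obtain ⟨b', L', hshape'⟩ := avail_shape hav
    have hlenA := avail_len hσ hmd hA
    have hle := lp_le_of_rank_le G S (some m) (σ s) (s :: σ n) hlenA hrank
    refine ⟨by rw [hshape']; simp, ?_⟩
    calc lpVal G (σ s) ≤ lpVal G (s :: σ n) := hle
      _ = lpRank (G.rel s n) := by rw [hshape]; rfl

lemma main_lemma (hσ : Stable G tb S (some m) d SecModel.second σ) (hmd : m ≠ d) :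
    ∀ k s, s ≠ d → s ≠ m → ∀ R, R.length ≤ k → Perceivable G (some m) d s R →
      σ s ≠ [] ∧ lpVal G (σ s) ≤ lpVal G R := by
  intro k
  induction k with
  | zero =>
    intro s hsd hsm R hlen hperc
    rw [List.length_eq_zero_iff.mp (Nat.le_zero.mp hlen)] at hperc
    simp [Perceivable] at hperc
  | succ k ih =>
    intro s hsd hsm R hlen hperc
    obtain ⟨hhead, hcases⟩ := hperc
    rcases hcases with ⟨⟨hnd2, hpath, hlast⟩, hexp, hm2⟩ |
      ⟨m', R', hm', hReq, hroute, hdnot, hexp'⟩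
    · obtain ⟨t, rfl⟩ := head?_destruct hhead
      match t with
      | [] =>
        exfalso
        simp at hlast
        exact hsd hlast
      | [n] =>
        have hn : n = d := by simpa using hlast
        have hA : Avail G (some m) d σ s [s, n] := by
          refine Or.inl ⟨d, by rw [← hn]; exact hpath.1,
            fun m' hm' => by cases hm'; exact fun h => hmd h.symm,
            by rw [hσ.1]; simp, by rw [hσ.1]; rfl, by rw [hσ.1]; simp [hsd],
            by rw [hσ.1]; trivial, by rw [hσ.1, hn]⟩
        obtain ⟨hav, hrank⟩ := stable_pair hσ s hsd hsm _ hA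
        obtain ⟨b', L', hshape'⟩ := avail_shape hav
        have hle := lp_le_of_rank_le G S (some m) (σ s) [s, n] (avail_len hσ hmd hA) hrank
        exact ⟨by rw [hshape']; simp, hle⟩
      | n :: c :: t3 =>
        have hadj : G.adj s n = true := hpath.1
        have hmR : m ∉ s :: n :: c :: t3 := hm2 m rfl
        have hnm : n ≠ m := by
          intro h
          exact hmR (by rw [← h]; simp)
        have hnd : n ≠ d := by
          intro h
          have hd2 : d ∈ c :: t3 := by
            apply mem_of_getLast?_aux
            rw [← List.getLast?_cons_cons (a := n), ← List.getLast?_cons_cons (a := s)]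
            exact hlast
          exact ((List.nodup_cons.mp (List.nodup_cons.mp hnd2).2).1) (h ▸ hd2)
        have hTperc : Perceivable G (some m) d n (n :: c :: t3) := by
          refine ⟨rfl, Or.inl ⟨⟨(List.nodup_cons.mp hnd2).2, hpath.2, ?_⟩, hexp.2, ?_⟩⟩
          · rw [← List.getLast?_cons_cons (a := s)]; exact hlast
          · intro m' hm'
            cases hm'
            exact fun h => hmR (List.mem_cons_of_mem _ h)
        have hlenT : (n :: c :: t3).length ≤ k := by
          simp only [List.length_cons] at hlen ⊢
          omega
        have ihn := ih n hnd hnm _ hlenT hTperc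
        exact core_step hσ hmd hsd hsm hadj hnm hnd ihn.1 ihn.2 hexp.1
    · cases hm'
      have hhdR' : R'.head? = some s := by
        cases R' with
        | nil => exact absurd hroute.2.2 (by simp)
        | cons a t =>
          rw [hReq] at hhead
          simp only [List.cons_append, List.head?_cons, Option.some.injEq] at hhead
          simp [hhead]
      obtain ⟨t, rfl⟩ := head?_destruct hhdR'
      match t with
      | [] =>
        exfalso
        have h2 := hroute.2.2
        simp at h2
        exact hsm h2
      | [n] =>
        have hn : n = m := by simpa using hroute.2.2
        have hA : Avail G (some m) d σ s [s, n, d] :=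
          Or.inr ⟨n, by rw [hn], by exact hroute.2.1.1, hsd, rfl⟩
        obtain ⟨hav, hrank⟩ := stable_pair hσ s hsd hsm _ hA
        obtain ⟨b', L', hshape'⟩ := avail_shape hav
        have hle := lp_le_of_rank_le G S (some m) (σ s) [s, n, d] (avail_len hσ hmd hA) hrank
        refine ⟨by rw [hshape']; simp, ?_⟩
        rw [hReq]
        exact hle
      | n :: c :: t3 =>
        have hadj : G.adj s n = true := hroute.2.1.1
        have hnm : n ≠ m := by
          intro h
          have hd2 : m ∈ c :: t3 := by
            apply mem_of_getLast?_aux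
            rw [← List.getLast?_cons_cons (a := n), ← List.getLast?_cons_cons (a := s)]
            exact hroute.2.2
          exact ((List.nodup_cons.mp (List.nodup_cons.mp hroute.1).2).1) (h ▸ hd2)
        have hnd : n ≠ d := by
          intro h
          exact hdnot (by rw [← h]; simp)
        have hTperc : Perceivable G (some m) d n ((n :: c :: t3) ++ [d]) := by
          refine ⟨rfl, Or.inr ⟨m, n :: c :: t3, rfl, rfl,
            ⟨(List.nodup_cons.mp hroute.1).2, hroute.2.1.2, ?_⟩, ?_, hexp'.2⟩⟩
          · rw [← List.getLast?_cons_cons (a := s)]; exact hroute.2.2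
          · exact fun h => hdnot (List.mem_cons_of_mem _ h)
        have hlenT : ((n :: c :: t3) ++ [d]).length ≤ k := by
          rw [hReq] at hlen
          simp only [List.length_append, List.length_cons, List.length_nil] at hlen ⊢
          omega
        have ihn := ih n hnd hnm _ hlenT hTperc
        have hcore := core_step hσ hmd hsd hsm hadj hnm hnd ihn.1 ihn.2 hexp'.1
        refine ⟨hcore.1, ?_⟩
        rw [hReq]
        exact hcore.2

lemma perceivable_shape {s : V} (hsd : s ≠ d) (hsm : s ≠ m) {R : List V}
    (hperc : Perceivable G (some m) d s R) : ∃ n L, R = s :: n :: L := by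
  obtain ⟨hhead, hcases⟩ := hperc
  rcases hcases with ⟨⟨_, _, hlast⟩, _, _⟩ | ⟨m', R', hm', hReq, hroute, _, _⟩
  · obtain ⟨t, rfl⟩ := head?_destruct hhead
    cases t with
    | nil => simp at hlast; exact absurd hlast hsd
    | cons n L => exact ⟨n, L, rfl⟩
  · cases hm'
    have hhdR' : R'.head? = some s := by
      cases R' with
      | nil => exact absurd hroute.2.2 (by simp)
      | cons a t =>
        rw [hReq] at hhead
        simp only [List.cons_append, List.head?_cons, Option.some.injEq] at hhead
        simp [hhead]
    obtain ⟨t, rfl⟩ := head?_destruct hhdR'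
    cases t with
    | nil => exact ⟨d, [], by rw [hReq]; rfl⟩
    | cons n L => exact ⟨n, L ++ [d], by rw [hReq]; rfl⟩

end Aux

/-- **Deployment-invariance of route type in the security second model.**
For any destination `d`, attacker `m`, source `s` and secure deployment `S`,
the stable route of `s` has the same relationship type (customer, peer or
provider) as every route in `BPR(s, ∅, m, d)`, the set of most-preferred
perceivable routes of `s` when no AS is secure. -/
theorem second_model_type_invariant {V : Type*} [Fintype V] [DecidableEq V]
    (G : ASGraph V) (tb : V → List V → ℕ) (hinj : InjTB tb)
    (m d : V) (hmd : m ≠ d) (S : Finset V)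
    (σ : V → List V) (hσ : Stable G tb S (some m) d SecModel.second σ)
    (s : V) (hs : s ≠ m)
    (R : List V) (hR : BPR G ∅ (some m) d SecModel.second s R) :
    nextRel G (σ s) = nextRel G R := by
  obtain ⟨hperc, hmin⟩ := hR
  by_cases hsd : s = d
  · -- s is the destination: both routes are trivial
    have hRd : R = [s] := by
      obtain ⟨hhead, hcases⟩ := hperc
      rcases hcases with ⟨⟨hnd2, _, hlast⟩, _, _⟩ | ⟨m', R', hm', hReq, hroute, hdnot, _⟩
      · obtain ⟨t, rfl⟩ := head?_destruct hhead
        cases t with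
        | nil => rfl
        | cons b t' =>
          exfalso
          have hd2 : d ∈ b :: t' := by
            apply mem_of_getLast?_aux
            rw [← List.getLast?_cons_cons (a := s)]
            exact hlast
          exact (List.nodup_cons.mp hnd2).1 (by rw [hsd]; exact hd2)
      · exfalso
        cases hm'
        have hhdR' : R'.head? = some s := by
          cases R' with
          | nil => exact absurd hroute.2.2 (by simp)
          | cons a t =>
            rw [hReq] at hhead
            simp only [List.cons_append, List.head?_cons, Option.some.injEq] at hhead
            simp [hhead]
        obtain ⟨t, rfl⟩ := head?_destruct hhdR'
        exact hdnot (by rw [hsd]; simp)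
    rw [hRd, hsd, hσ.1]
  · have key := main_lemma hσ hmd R.length s hsd hs R le_rfl hperc
    have havail := stable_avail hσ s hsd hs key.1
    obtain ⟨b, L, hshape⟩ := avail_shape havail
    have hpercσ := sigma_perceivable hσ hmd (σ s).length s hs le_rfl key.1
    have hrank := hmin (σ s) hpercσ
    have hlenσ : (σ s).length ≤ Fintype.card V + 1 := by
      have := List.Nodup.length_le_card (sigma_nodup' hσ hmd s)
      omega
    have hlp2 : lpVal G R ≤ lpVal G (σ s) := lp_le_of_rank_le G ∅ (some m) R (σ s) hlenσ hrank
    have heq : lpVal G (σ s) = lpVal G R := le_antisymm key.2 hlp2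
    obtain ⟨n, L', hRshape⟩ := perceivable_shape hsd hs hperc
    rw [hshape, hRshape] at heq
    rw [hshape, hRshape]
    have hrel : G.rel s b = G.rel s n := lpRank_injective heq
    show some (G.rel s b) = some (G.rel s n)
    rw [hrel]

end SBGP
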